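/- Let R_1, …, R_k be nonempty subsets of a finite set Λ, (p_x)_{x∈Λ} probability weights on I, (J_{xy}) a symmetric family of reals, σ = max_{s∈I}|s| ≥ 1, and 0 < δ < 1. Define ξ_t(R) and w_0(R) as follows: ξ_t({x}) = Σ_{s∈I}(e^{its}−1)p_x(s) and w_0({x}) = δσ; for |R| ≥ 2, ξ_t(R) = Σ_{s_R∈I^R} Σ_{g∈G_R} Σ_{S⊂R} Π_{{x,y}∈E_g}(e^{J_{xy}s_xs_y}−1) Π_{x∈S}(e^{its_x}−1) Π_{x∈R} p_x(s_x) and w_0(R) = (1+δσ)^{|R|} Σ_{s_R∈I^R} Π_{x∈R} p_x(s_x)|Σ_{g∈G_R} Π_{{x,y}∈E_g}(e^{J_{xy}s_xs_y}−1)|. Then for every t with 0 < t ≤ δ, | d²/dt² [Π_{i=1}^k ξ_t(R_i)] | ≤ (σ²/δ²) Π_{i=1}^k ( e^{|R_i|} w_0(R_i) ). -/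

import Mathlib

open Finset
open scoped Classical

namespace SpinLCLT

/-- The set of connected simple graphs on a finite vertex type `W`. -/
noncomputable def connGraphs (W : Type*) [Fintype W] : Finset (SimpleGraph W) :=
  Finset.univ.filter (fun g => g.Connected)

/-- The product over the edges `{x,y}` of a graph `g` of the Mayer factors
`e^{J_{xy} f(x) f(y)} − 1`. -/
noncomputable def edgeProd {W : Type*} [Fintype W] [DecidableEq W]
    (J : W → W → ℝ) (hJ : ∀ x y, J x y = J y x) (f : W → ℝ)
    (g : SimpleGraph W) : ℂ :=
  ∏ e ∈ g.edgeFinset,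
    Sym2.lift ⟨fun x y => Complex.exp ((J x y * f x * f y : ℝ) : ℂ) - 1,
      fun x y => by dsimp only; rw [hJ x y, mul_right_comm]⟩ e

/-- The polymer activity `ξ_t(R)`:
`ξ_t({x}) = Σ_{s∈I}(e^{its}−1)p_x(s)` and, for `|R| ≥ 2`,
`ξ_t(R) = Σ_{s_R∈I^R} Σ_{g∈G_R} Σ_{S⊆R} Π_{{x,y}∈E_g}(e^{J_{xy}s_xs_y}−1)
Π_{x∈S}(e^{its_x}−1) Π_{x∈R} p_x(s_x)`, where `I = Finset.Icc a b`. -/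
noncomputable def xi (a b : ℤ) {V : Type*} [DecidableEq V] (p : V → ℤ → ℝ)
    (J : V → V → ℝ) (hJ : ∀ x y, J x y = J y x) (R : Finset V) (t : ℝ) : ℂ :=
  if R.card = 1 then
    ∑ x ∈ R, ∑ z ∈ Finset.Icc a b,
      (Complex.exp (Complex.I * t * z) - 1) * (p x z : ℂ)
  else
    ∑ s ∈ Fintype.piFinset (fun _ : ↥R => Finset.Icc a b),
      ∑ g ∈ connGraphs ↥R,
        ∑ S ∈ (Finset.univ : Finset ↥R).powerset,
          (edgeProd (fun x y : ↥R => J ↑x ↑y) (fun x y => hJ ↑x ↑y)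
              (fun x : ↥R => (s x : ℝ)) g) *
            (∏ x ∈ S, (Complex.exp (Complex.I * t * (s x : ℤ)) - 1)) *
            (∏ x : ↥R, (p ↑x (s x) : ℂ))

/-- The weight `w₀(R)`: `w₀({x}) = δσ` and, for `|R| ≥ 2`,
`w₀(R) = (1+δσ)^{|R|} Σ_{s_R∈I^R} Π_{x∈R} p_x(s_x) ·
|Σ_{g∈G_R} Π_{{x,y}∈E_g}(e^{J_{xy}s_xs_y}−1)|`. -/
noncomputable def w0 (a b : ℤ) {V : Type*} [DecidableEq V] (δ σ : ℝ)
    (p : V → ℤ → ℝ) (J : V → V → ℝ) (hJ : ∀ x y, J x y = J y x)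
    (R : Finset V) : ℝ :=
  if R.card = 1 then δ * σ
  else (1 + δ * σ) ^ R.card *
    ∑ s ∈ Fintype.piFinset (fun _ : ↥R => Finset.Icc a b),
      (∏ x : ↥R, p ↑x (s x)) *
        ‖ (∑ g ∈ connGraphs ↥R,
          edgeProd (fun x y : ↥R => J ↑x ↑y) (fun x y => hJ ↑x ↑y)
            (fun x : ↥R => (s x : ℝ)) g)‖


section Aux

lemma sq_le_exp' (x : ℝ) (hx : 0 ≤ x) : x ^ 2 ≤ Real.exp x := by
  have h := Real.sum_le_exp_of_nonneg hx 4
  simp [Finset.sum_range_succ, Nat.factorial] at h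
  nlinarith [mul_nonneg hx (sq_nonneg (x - 3/2))]

lemma abs_exp_I_sub_one (x : ℝ) :
    ‖ (Complex.exp (↑x * Complex.I) - 1)‖ ≤ |x| := by
  rw [Complex.exp_mul_I]
  have h : Complex.cos ↑x + Complex.sin ↑x * Complex.I - 1 =
      ↑(Real.cos x - 1) + ↑(Real.sin x) * Complex.I := by
    push_cast [Complex.ofReal_cos, Complex.ofReal_sin]; ring
  rw [h, Complex.norm_add_mul_I, show |x| = Real.sqrt (x ^ 2) from (Real.sqrt_sq_eq_abs x).symm]
  apply Real.sqrt_le_sqrt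
  nlinarith [Real.sin_sq_add_cos_sq x, Real.one_sub_sq_div_two_le_cos (x := x), Real.cos_le_one x]

lemma hasDerivAt_texp (μ : ℂ) (t : ℝ) :
    HasDerivAt (fun u : ℝ => Complex.exp (Complex.I * ↑u * μ))
      (Complex.I * μ * Complex.exp (Complex.I * ↑t * μ)) t := by
  have h1 : HasDerivAt (fun w : ℂ => Complex.I * w * μ) (Complex.I * μ) ↑t := by
    simpa using ((hasDerivAt_id (t : ℂ)).const_mul Complex.I).mul_const μ
  have h3 := h1.cexp.comp_ofReal
  convert h3 using 1
  ring

noncomputable def trig {α : Type*} (s : Finset α) (c : α → ℂ) (μ : α → ℤ) (j : ℕ) :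
    ℝ → ℂ :=
  fun u => ∑ a ∈ s, c a * (Complex.I * (μ a : ℂ)) ^ j * Complex.exp (Complex.I * ↑u * (μ a : ℂ))

lemma trig_hasDerivAt {α : Type*} (s : Finset α) (c : α → ℂ) (μ : α → ℤ) (j : ℕ) (t : ℝ) :
    HasDerivAt (trig s c μ j) (trig s c μ (j + 1) t) t := by
  unfold trig
  apply HasDerivAt.fun_sum (F := ℂ)
  intro a _
  have h := (hasDerivAt_texp (μ a : ℂ) t).const_mul (c a * (Complex.I * (μ a : ℂ)) ^ j)
  refine h.congr_deriv ?_
  ring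

lemma trig_abs_le {α : Type*} (s : Finset α) (c : α → ℂ) (μ : α → ℤ) (j : ℕ) (t K : ℝ)
    (hμ : ∀ a ∈ s, |(μ a : ℝ)| ≤ K) :
    ‖ (trig s c μ j t)‖ ≤ (∑ a ∈ s, ‖ (c a)‖) * K ^ j := by
  unfold trig
  refine le_trans (norm_sum_le _ _) ?_
  rw [Finset.sum_mul]
  apply Finset.sum_le_sum
  intro a ha
  have he : ‖ (Complex.exp (Complex.I * ↑t * (μ a : ℂ)))‖ = 1 := by
    rw [Complex.norm_exp]
    norm_num [Complex.mul_re, Complex.mul_im]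
  rw [norm_mul, norm_mul, he, mul_one, norm_pow, norm_mul, Complex.norm_I, one_mul,
    Complex.norm_intCast]
  gcongr
  exact hμ a ha

variable {V : Type*} [DecidableEq V] (a b : ℤ) (p : V → ℤ → ℝ)
  (J : V → V → ℝ) (hJ : ∀ x y, J x y = J y x)

lemma xi_card_one_rep (R : Finset V) (h1 : R.card = 1)
    (hp1 : ∀ x, ∑ z ∈ Finset.Icc a b, p x z = 1) :
    xi a b p J hJ R = fun u =>
      trig (R ×ˢ Finset.Icc a b) (fun y => ((p y.1 y.2 : ℝ) : ℂ)) (fun y => y.2) 0 u - 1 := by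
  funext u
  simp only [xi, if_pos h1, trig, pow_zero, mul_one]
  rw [Finset.sum_product]
  have hx : ∀ x ∈ R, ∑ z ∈ Finset.Icc a b, (Complex.exp (Complex.I * ↑u * (z : ℂ)) - 1) * (p x z : ℂ)
      = (∑ z ∈ Finset.Icc a b, (p x z : ℂ) * Complex.exp (Complex.I * ↑u * (z : ℂ))) - 1 := by
    intro x _
    have hps : (∑ z ∈ Finset.Icc a b, (p x z : ℂ)) = 1 := by
      rw [← Complex.ofReal_sum, hp1 x, Complex.ofReal_one]
    calc ∑ z ∈ Finset.Icc a b, (Complex.exp (Complex.I * ↑u * (z : ℂ)) - 1) * (p x z : ℂ)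
        = ∑ z ∈ Finset.Icc a b, ((p x z : ℂ) * Complex.exp (Complex.I * ↑u * (z : ℂ)) - (p x z : ℂ)) :=
          Finset.sum_congr rfl (fun z _ => by ring)
      _ = (∑ z ∈ Finset.Icc a b, (p x z : ℂ) * Complex.exp (Complex.I * ↑u * (z : ℂ)))
            - ∑ z ∈ Finset.Icc a b, (p x z : ℂ) := Finset.sum_sub_distrib _ _
      _ = _ - 1 := by rw [hps]
  rw [Finset.sum_congr rfl hx, Finset.sum_sub_distrib]
  simp [h1]

lemma xi_card_ne_one_rep (R : Finset V) (h1 : R.card ≠ 1) :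
    xi a b p J hJ R = trig (Fintype.piFinset (fun _ : ↥R => Finset.Icc a b))
      (fun s => (∑ g ∈ connGraphs ↥R,
          edgeProd (fun x y : ↥R => J ↑x ↑y) (fun x y => hJ ↑x ↑y)
            (fun x : ↥R => (s x : ℝ)) g) * ∏ x : ↥R, (p ↑x (s x) : ℂ))
      (fun s => ∑ x : ↥R, s x) 0 := by
  funext u
  simp only [xi, if_neg h1, trig, pow_zero, mul_one]
  apply Finset.sum_congr rfl
  intro s _
  have hexp : (∑ S ∈ (Finset.univ : Finset ↥R).powerset,
      ∏ x ∈ S, (Complex.exp (Complex.I * ↑u * ((s x : ℤ) : ℂ)) - 1))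
      = Complex.exp (Complex.I * ↑u * ((∑ x : ↥R, s x : ℤ) : ℂ)) := by
    have hpa := Finset.prod_add
      (fun x : ↥R => Complex.exp (Complex.I * ↑u * ((s x : ℤ) : ℂ)) - 1)
      (fun _ : ↥R => (1 : ℂ)) Finset.univ
    simp only [sub_add_cancel, Finset.prod_const_one, mul_one] at hpa
    rw [← hpa]
    rw [← Complex.exp_sum]
    congr 1
    push_cast
    rw [Finset.mul_sum]
  rw [← hexp]
  simp only [Finset.mul_sum, Finset.sum_mul]
  rw [Finset.sum_comm]
  apply Finset.sum_congr rfl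
  intro S _
  apply Finset.sum_congr rfl
  intro g _
  ring

lemma w0_nonneg (δ σ : ℝ) (hδ : 0 ≤ δ) (hσ : 0 ≤ σ)
    (hp0 : ∀ x, ∀ z ∈ Finset.Icc a b, 0 ≤ p x z) (R : Finset V) :
    0 ≤ w0 a b δ σ p J hJ R := by
  rw [w0]
  split
  · positivity
  · apply mul_nonneg (by positivity)
    apply Finset.sum_nonneg
    intro s hs
    apply mul_nonneg _ (norm_nonneg _)
    apply Finset.prod_nonneg
    intro x _
    exact hp0 x (s x) (by exact (Fintype.mem_piFinset.mp hs) x)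

lemma xi_package (σ δ : ℝ) (hσ : σ = max |(a : ℝ)| |(b : ℝ)|) (hσ1 : 1 ≤ σ)
    (hδ0 : 0 < δ) (hδ1 : δ < 1)
    (hp0 : ∀ x, ∀ z ∈ Finset.Icc a b, 0 ≤ p x z)
    (hp1 : ∀ x, ∑ z ∈ Finset.Icc a b, p x z = 1)
    (R : Finset V) (t : ℝ) (ht0 : 0 < t) (htδ : t ≤ δ) :
    ∃ g h : ℝ → ℂ,
      (∀ u, HasDerivAt (xi a b p J hJ R) (g u) u) ∧
      (∀ u, HasDerivAt g (h u) u) ∧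
      ‖ (xi a b p J hJ R t)‖ ≤ w0 a b δ σ p J hJ R ∧
      ‖ (g t)‖ ≤ (σ / δ * R.card) * w0 a b δ σ p J hJ R ∧
      ‖ (h t)‖ ≤ (σ / δ * R.card) ^ 2 * w0 a b δ σ p J hJ R := by
  have hσ0 : (0 : ℝ) < σ := lt_of_lt_of_le one_pos hσ1
  have hzσ : ∀ z ∈ Finset.Icc a b, |(z : ℝ)| ≤ σ := by
    intro z hz
    rw [Finset.mem_Icc] at hz
    have h1 : (a : ℝ) ≤ (z : ℝ) := by exact_mod_cast hz.1
    have h2 : (z : ℝ) ≤ (b : ℝ) := by exact_mod_cast hz.2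
    rw [hσ, abs_le]
    constructor
    · have := neg_abs_le (a : ℝ)
      have := le_max_left |(a : ℝ)| |(b : ℝ)|
      linarith
    · have := le_abs_self (b : ℝ)
      have := le_max_right |(a : ℝ)| |(b : ℝ)|
      linarith
  by_cases h1 : R.card = 1
  · -- single-site case
    have hw : w0 a b δ σ p J hJ R = δ * σ := by rw [w0, if_pos h1]
    set s0 := R ×ˢ Finset.Icc a b with hs0
    set c : V × ℤ → ℂ := fun y => ((p y.1 y.2 : ℝ) : ℂ) with hc
    set μ : V × ℤ → ℤ := fun y => y.2 with hμdef
    have hrep := xi_card_one_rep a b p J hJ R h1 hp1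
    have hsum : (∑ y ∈ s0, ‖ (c y)‖) = 1 := by
      rw [hs0, Finset.sum_product]
      have : ∀ x ∈ R, ∑ z ∈ Finset.Icc a b, ‖ (c (x, z))‖ = 1 := by
        intro x hx
        rw [show (∑ z ∈ Finset.Icc a b, ‖ (c (x, z))‖)
            = ∑ z ∈ Finset.Icc a b, p x z from
          Finset.sum_congr rfl (fun z hz => by
            rw [hc]; simp only [Complex.norm_real, Real.norm_eq_abs]; exact abs_of_nonneg (hp0 x z hz))]
        exact hp1 x
      rw [Finset.sum_congr rfl this, Finset.sum_const, h1, one_smul]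
    have hμb : ∀ y ∈ s0, |((μ y : ℤ) : ℝ)| ≤ σ := by
      intro y hy
      rw [hs0, Finset.mem_product] at hy
      exact hzσ y.2 hy.2
    refine ⟨trig s0 c μ 1, trig s0 c μ 2, ?_, ?_, ?_, ?_, ?_⟩
    · intro u
      rw [hrep]
      exact (trig_hasDerivAt s0 c μ 0 u).sub_const 1
    · intro u
      exact trig_hasDerivAt s0 c μ 1 u
    · -- value bound
      rw [hw]
      show ‖ (xi a b p J hJ R t)‖ ≤ δ * σ
      simp only [xi, if_pos h1]
      refine le_trans (norm_sum_le _ _) ?_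
      have h2 : ∀ x ∈ R, ‖ (∑ z ∈ Finset.Icc a b,
          (Complex.exp (Complex.I * ↑t * (z : ℂ)) - 1) * (p x z : ℂ))‖ ≤ δ * σ := by
        intro x hx
        refine le_trans (norm_sum_le _ _) ?_
        have h3 : ∀ z ∈ Finset.Icc a b,
            ‖ ((Complex.exp (Complex.I * ↑t * (z : ℂ)) - 1) * (p x z : ℂ))‖
              ≤ (δ * σ) * p x z := by
          intro z hz
          rw [norm_mul, Complex.norm_real, Real.norm_eq_abs, abs_of_nonneg (hp0 x z hz)]
          apply mul_le_mul_of_nonneg_right _ (hp0 x z hz)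
          have h4 : Complex.I * ↑t * (z : ℂ) = ↑(t * (z : ℝ)) * Complex.I := by
            push_cast; ring
          rw [h4]
          refine le_trans (abs_exp_I_sub_one _) ?_
          rw [abs_mul]
          apply mul_le_mul _ (hzσ z hz) (abs_nonneg _) (le_of_lt hδ0)
          rw [abs_of_pos ht0]; exact htδ
        refine le_trans (Finset.sum_le_sum h3) ?_
        rw [← Finset.mul_sum, hp1 x, mul_one]
      refine le_trans (Finset.sum_le_sum h2) ?_
      rw [Finset.sum_const, h1, one_smul]
    · -- first derivative bound
      refine le_trans (trig_abs_le s0 c μ 1 t σ hμb) ?_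
      rw [hsum, hw, h1, one_mul, pow_one]
      push_cast
      have heq : σ / δ * 1 * (δ * σ) = σ * σ := by field_simp
      rw [heq]
      nlinarith
    · -- second derivative bound
      refine le_trans (trig_abs_le s0 c μ 2 t σ hμb) ?_
      rw [hsum, hw, h1, one_mul]
      push_cast
      have heq : (σ / δ * 1) ^ 2 * (δ * σ) = σ * σ * σ / δ := by field_simp
      rw [heq, le_div_iff₀ hδ0]
      nlinarith
  · -- multi-site case
    have hrep := xi_card_ne_one_rep a b p J hJ R h1
    set s0 := Fintype.piFinset (fun _ : ↥R => Finset.Icc a b) with hs0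
    set c : (↥R → ℤ) → ℂ := fun s => (∑ g ∈ connGraphs ↥R,
        edgeProd (fun x y : ↥R => J ↑x ↑y) (fun x y => hJ ↑x ↑y)
          (fun x : ↥R => (s x : ℝ)) g) * ∏ x : ↥R, (p ↑x (s x) : ℂ) with hcdef
    set μ : (↥R → ℤ) → ℤ := fun s => ∑ x : ↥R, s x with hμdef
    set W := ∑ s ∈ s0, (∏ x : ↥R, p ↑x (s x)) *
        ‖ (∑ g ∈ connGraphs ↥R,
          edgeProd (fun x y : ↥R => J ↑x ↑y) (fun x y => hJ ↑x ↑y)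
            (fun x : ↥R => (s x : ℝ)) g)‖ with hWdef
    have hcabs : ∀ s ∈ s0, ‖ (c s)‖ = (∏ x : ↥R, p ↑x (s x)) *
        ‖ (∑ g ∈ connGraphs ↥R,
          edgeProd (fun x y : ↥R => J ↑x ↑y) (fun x y => hJ ↑x ↑y)
            (fun x : ↥R => (s x : ℝ)) g)‖ := by
      intro s hs
      rw [hcdef]
      simp only []
      rw [norm_mul, mul_comm]
      congr 1
      rw [← Complex.ofReal_prod, Complex.norm_real, Real.norm_eq_abs]
      exact abs_of_nonneg (Finset.prod_nonneg fun x _ =>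
        hp0 _ _ ((Fintype.mem_piFinset.mp hs) x))
    have hsum : (∑ y ∈ s0, ‖ (c y)‖) = W := by
      rw [hWdef]
      exact Finset.sum_congr rfl hcabs
    have hW0 : 0 ≤ W := by
      rw [hWdef]
      apply Finset.sum_nonneg
      intro s hs
      exact mul_nonneg (Finset.prod_nonneg fun x _ =>
        hp0 _ _ ((Fintype.mem_piFinset.mp hs) x)) (norm_nonneg _)
    have hw : w0 a b δ σ p J hJ R = (1 + δ * σ) ^ R.card * W := by
      rw [w0, if_neg h1]
    have hpow : (1 : ℝ) ≤ (1 + δ * σ) ^ R.card := one_le_pow₀ (by nlinarith)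
    have hμb : ∀ s ∈ s0, |((μ s : ℤ) : ℝ)| ≤ σ * R.card := by
      intro s hs
      rw [hμdef]
      push_cast
      refine le_trans (Finset.abs_sum_le_sum_abs _ _) ?_
      refine le_trans (Finset.sum_le_sum (fun x _ =>
        hzσ (s x) ((Fintype.mem_piFinset.mp hs) x))) ?_
      rw [Finset.sum_const, nsmul_eq_mul, Finset.card_univ, Fintype.card_coe, mul_comm]
    have hσδ : σ ≤ σ / δ := by
      rw [le_div_iff₀ hδ0]; nlinarith
    refine ⟨trig s0 c μ 1, trig s0 c μ 2, ?_, ?_, ?_, ?_, ?_⟩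
    · intro u
      rw [hrep]
      exact trig_hasDerivAt s0 c μ 0 u
    · intro u
      exact trig_hasDerivAt s0 c μ 1 u
    · rw [hrep]
      refine le_trans (trig_abs_le s0 c μ 0 t (σ * R.card) hμb) ?_
      rw [hsum, hw, pow_zero, mul_one]
      exact le_mul_of_one_le_left hW0 hpow
    · refine le_trans (trig_abs_le s0 c μ 1 t (σ * R.card) hμb) ?_
      rw [hsum, hw, pow_one]
      calc W * (σ * R.card) = (σ * R.card) * W := by ring
        _ ≤ (σ / δ * R.card) * W := by
            apply mul_le_mul_of_nonneg_right _ hW0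
            exact mul_le_mul_of_nonneg_right hσδ (Nat.cast_nonneg _)
        _ ≤ (σ / δ * R.card) * ((1 + δ * σ) ^ R.card * W) := by
            apply mul_le_mul_of_nonneg_left (le_mul_of_one_le_left hW0 hpow)
            positivity
    · refine le_trans (trig_abs_le s0 c μ 2 t (σ * R.card) hμb) ?_
      rw [hsum, hw]
      calc W * (σ * R.card) ^ 2 = (σ * R.card) ^ 2 * W := by ring
        _ ≤ (σ / δ * R.card) ^ 2 * W := by
            apply mul_le_mul_of_nonneg_right _ hW0
            apply pow_le_pow_left₀ (by positivity)
            exact mul_le_mul_of_nonneg_right hσδ (Nat.cast_nonneg _)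
        _ ≤ (σ / δ * R.card) ^ 2 * ((1 + δ * σ) ^ R.card * W) := by
            apply mul_le_mul_of_nonneg_left (le_mul_of_one_le_left hW0 hpow)
            positivity


theorem second_deriv_prod_xi_bound'
    (hab : a < b)
    (Λ : Finset V)
    (hp0 : ∀ x, ∀ z ∈ Finset.Icc a b, 0 ≤ p x z)
    (hp1 : ∀ x, ∑ z ∈ Finset.Icc a b, p x z = 1)
    (σ δ : ℝ) (hσ : σ = max |(a : ℝ)| |(b : ℝ)|) (hσ1 : 1 ≤ σ)
    (hδ0 : 0 < δ) (hδ1 : δ < 1)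
    (k : ℕ) (R : Fin k → Finset V)
    (hRne : ∀ i, (R i).Nonempty) (hRsub : ∀ i, R i ⊆ Λ)
    (t : ℝ) (ht0 : 0 < t) (htδ : t ≤ δ) :
    ‖
        (deriv (deriv (fun t : ℝ => ∏ i : Fin k, xi a b p J hJ (R i) t)) t)‖ ≤
      σ ^ 2 / δ ^ 2 *
        ∏ i : Fin k, Real.exp ((R i).card : ℝ) * w0 a b δ σ p J hJ (R i) := by
  classical
  have hσ0 : (0 : ℝ) < σ := lt_of_lt_of_le one_pos hσ1
  choose g h hg hh hb0 hb1 hb2 using fun i =>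
    xi_package a b p J hJ σ δ hσ hσ1 hδ0 hδ1 hp0 hp1 (R i) t ht0 htδ
  set A : Fin k → ℝ := fun i => w0 a b δ σ p J hJ (R i) with hAdef
  set β : Fin k → ℝ := fun i => σ / δ * ((R i).card : ℝ) with hβdef
  have hA0 : ∀ i, 0 ≤ A i := fun i =>
    w0_nonneg a b p J hJ δ σ hδ0.le hσ0.le hp0 (R i)
  have hβ0 : ∀ i, 0 ≤ β i := fun i => by
    rw [hβdef]
    positivity
  -- first derivative of the product
  have hP : ∀ u : ℝ, HasDerivAt (fun v : ℝ => ∏ i : Fin k, xi a b p J hJ (R i) v)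
      (∑ i : Fin k, (∏ j ∈ Finset.univ.erase i, xi a b p J hJ (R j) u) * g i u) u := by
    intro u
    have := HasDerivAt.fun_finsetProd (u := (Finset.univ : Finset (Fin k)))
      (f := fun j => xi a b p J hJ (R j)) (f' := fun j => g j u) (x := u)
      (fun j _ => hg j u)
    simpa [smul_eq_mul] using this
  have hQdef : deriv (fun v : ℝ => ∏ i : Fin k, xi a b p J hJ (R i) v)
      = fun u => ∑ i : Fin k, (∏ j ∈ Finset.univ.erase i, xi a b p J hJ (R j) u) * g i u :=
    funext fun u => (hP u).deriv
  have hQ : HasDerivAt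
      (fun u => ∑ i : Fin k, (∏ j ∈ Finset.univ.erase i, xi a b p J hJ (R j) u) * g i u)
      (∑ i : Fin k,
        ((∑ j ∈ Finset.univ.erase i,
            (∏ l ∈ (Finset.univ.erase i).erase j, xi a b p J hJ (R l) t) * g j t) * g i t
          + (∏ j ∈ Finset.univ.erase i, xi a b p J hJ (R j) t) * h i t)) t := by
    apply HasDerivAt.fun_sum
    intro i _
    have hprod : HasDerivAt (fun u : ℝ => ∏ j ∈ Finset.univ.erase i, xi a b p J hJ (R j) u)
        (∑ j ∈ Finset.univ.erase i,
          (∏ l ∈ (Finset.univ.erase i).erase j, xi a b p J hJ (R l) t) * g j t) t := by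
      have := HasDerivAt.fun_finsetProd (u := Finset.univ.erase i)
        (f := fun j => xi a b p J hJ (R j)) (f' := fun j => g j t) (x := t)
        (fun j _ => hg j t)
      simpa [smul_eq_mul] using this
    exact hprod.mul (hh i t)
  have hD : deriv (deriv (fun v : ℝ => ∏ i : Fin k, xi a b p J hJ (R i) v)) t
      = ∑ i : Fin k,
        ((∑ j ∈ Finset.univ.erase i,
            (∏ l ∈ (Finset.univ.erase i).erase j, xi a b p J hJ (R l) t) * g j t) * g i t
          + (∏ j ∈ Finset.univ.erase i, xi a b p J hJ (R j) t) * h i t) := by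
    rw [hQdef]
    exact hQ.deriv
  rw [hD]
  set SA : ℝ := ∏ i : Fin k, A i with hSAdef
  have hSA0 : 0 ≤ SA := Finset.prod_nonneg fun i _ => hA0 i
  have hAf : ∀ i : Fin k, ∀ j ∈ Finset.univ.erase i,
      (∏ l ∈ (Finset.univ.erase i).erase j, A l) * A j * A i = SA := by
    intro i j hj
    rw [Finset.prod_erase_mul _ _ hj, Finset.prod_erase_mul _ _ (Finset.mem_univ i)]
  -- main estimate
  have step1 : ‖ (∑ i : Fin k,
        ((∑ j ∈ Finset.univ.erase i,
            (∏ l ∈ (Finset.univ.erase i).erase j, xi a b p J hJ (R l) t) * g j t) * g i t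
          + (∏ j ∈ Finset.univ.erase i, xi a b p J hJ (R j) t) * h i t))‖
      ≤ ∑ i : Fin k, ((∑ j ∈ Finset.univ.erase i, β i * β j * SA) + β i ^ 2 * SA) := by
    refine le_trans (norm_sum_le _ _) (Finset.sum_le_sum ?_)
    intro i _
    refine le_trans (norm_add_le _ _) ?_
    have hX : ‖ (∑ j ∈ Finset.univ.erase i,
        (∏ l ∈ (Finset.univ.erase i).erase j, xi a b p J hJ (R l) t) * g j t)‖
        ≤ ∑ j ∈ Finset.univ.erase i,
          (∏ l ∈ (Finset.univ.erase i).erase j, A l) * (β j * A j) := by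
      refine le_trans (norm_sum_le _ _) (Finset.sum_le_sum ?_)
      intro j hj
      rw [norm_mul, norm_prod]
      exact mul_le_mul
        (Finset.prod_le_prod (fun l _ => norm_nonneg _) (fun l _ => hb0 l))
        (hb1 j) (norm_nonneg _)
        (Finset.prod_nonneg fun l _ => hA0 l)
    have hY : ‖ (∏ j ∈ Finset.univ.erase i, xi a b p J hJ (R j) t)‖
        ≤ ∏ j ∈ Finset.univ.erase i, A j := by
      rw [norm_prod]
      exact Finset.prod_le_prod (fun l _ => norm_nonneg _) (fun l _ => hb0 l)
    have t1 : ‖ ((∑ j ∈ Finset.univ.erase i,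
        (∏ l ∈ (Finset.univ.erase i).erase j, xi a b p J hJ (R l) t) * g j t) * g i t)‖
        ≤ (∑ j ∈ Finset.univ.erase i,
            (∏ l ∈ (Finset.univ.erase i).erase j, A l) * (β j * A j)) * (β i * A i) := by
      rw [norm_mul]
      refine mul_le_mul hX (hb1 i) (norm_nonneg _) ?_
      exact Finset.sum_nonneg fun j _ => mul_nonneg
        (Finset.prod_nonneg fun l _ => hA0 l) (mul_nonneg (hβ0 j) (hA0 j))
    have t2 : ‖ ((∏ j ∈ Finset.univ.erase i, xi a b p J hJ (R j) t) * h i t)‖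
        ≤ (∏ j ∈ Finset.univ.erase i, A j) * (β i ^ 2 * A i) := by
      rw [norm_mul]
      exact mul_le_mul hY (hb2 i) (norm_nonneg _)
        (Finset.prod_nonneg fun l _ => hA0 l)
    refine le_trans (add_le_add t1 t2) (le_of_eq ?_)
    congr 1
    · rw [Finset.sum_mul]
      refine Finset.sum_congr rfl ?_
      intro j hj
      rw [← hAf i j hj]
      ring
    · rw [hSAdef, ← Finset.prod_erase_mul Finset.univ A (Finset.mem_univ i)]
      ring
  refine le_trans step1 ?_
  -- now purely numeric
  have step2 : (∑ i : Fin k, ((∑ j ∈ Finset.univ.erase i, β i * β j * SA) + β i ^ 2 * SA))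
      = (∑ i : Fin k, β i) * (∑ i : Fin k, β i) * SA := by
    have hrow : ∀ i : Fin k, (∑ j ∈ Finset.univ.erase i, β i * β j * SA) + β i ^ 2 * SA
        = β i * (∑ j : Fin k, β j) * SA := by
      intro i
      rw [← Finset.sum_erase_add _ _ (Finset.mem_univ i), mul_add, add_mul,
        Finset.mul_sum, Finset.sum_mul, sq]
    rw [Finset.sum_congr rfl (fun i _ => hrow i), Finset.sum_mul, Finset.sum_mul]
  rw [step2]
  set N : ℝ := ∑ i : Fin k, ((R i).card : ℝ) with hNdef
  have hN0 : 0 ≤ N := Finset.sum_nonneg fun i _ => Nat.cast_nonneg _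
  have hβsum : (∑ i : Fin k, β i) = σ / δ * N := by
    rw [hNdef, Finset.mul_sum]
  have hRHS : σ ^ 2 / δ ^ 2 * ∏ i : Fin k, Real.exp ((R i).card : ℝ) * w0 a b δ σ p J hJ (R i)
      = σ ^ 2 / δ ^ 2 * (Real.exp N * SA) := by
    rw [Finset.prod_mul_distrib, ← Real.exp_sum]
  rw [hRHS, hβsum]
  have hNe : N ^ 2 ≤ Real.exp N := sq_le_exp' N hN0
  calc σ / δ * N * (σ / δ * N) * SA = σ ^ 2 / δ ^ 2 * (N ^ 2 * SA) := by ring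
    _ ≤ σ ^ 2 / δ ^ 2 * (Real.exp N * SA) := by
        apply mul_le_mul_of_nonneg_left _ (by positivity)
        exact mul_le_mul_of_nonneg_right hNe hSA0

end Aux

/-- For nonempty subsets `R_1,…,R_k` of a finite set `Λ`,
probability weights `(p_x)`, symmetric `(J_{xy})`, `σ = max_{s∈I}|s| ≥ 1` and
`0 < δ < 1`: for every `t` with `0 < t ≤ δ`,
`|d²/dt² Π_{i=1}^k ξ_t(R_i)| ≤ (σ²/δ²) Π_{i=1}^k (e^{|R_i|} w₀(R_i))`. -/
theorem second_deriv_prod_xi_bound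
    (a b : ℤ) (hab : a < b) {V : Type*} [DecidableEq V]
    (Λ : Finset V)
    (p : V → ℤ → ℝ)
    (hp0 : ∀ x, ∀ z ∈ Finset.Icc a b, 0 ≤ p x z)
    (hp1 : ∀ x, ∑ z ∈ Finset.Icc a b, p x z = 1)
    (J : V → V → ℝ) (hJ : ∀ x y, J x y = J y x)
    (σ δ : ℝ) (hσ : σ = max |(a : ℝ)| |(b : ℝ)|) (hσ1 : 1 ≤ σ)
    (hδ0 : 0 < δ) (hδ1 : δ < 1)
    (k : ℕ) (R : Fin k → Finset V)
    (hRne : ∀ i, (R i).Nonempty) (hRsub : ∀ i, R i ⊆ Λ)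
    (t : ℝ) (ht0 : 0 < t) (htδ : t ≤ δ) :
    ‖
        (deriv (deriv (fun t : ℝ => ∏ i : Fin k, xi a b p J hJ (R i) t)) t)‖ ≤
      σ ^ 2 / δ ^ 2 *
        ∏ i : Fin k, Real.exp ((R i).card : ℝ) * w0 a b δ σ p J hJ (R i) := by
  exact second_deriv_prod_xi_bound' a b p J hJ hab Λ hp0 hp1 σ δ hσ hσ1 hδ0 hδ1
    k R hRne hRsub t ht0 htδ


end SpinLCLT
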